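/- Let z ∈ ℝⁿ be a random vector with i.i.d. N(0, v²) entries and let D ∈ ℝ^{m×n} be a fixed matrix. Then for any constant vector b ∈ ℝᵐ in the range of D, the conditional distribution of z given Dz = b equals the distribution of D⁺b + Π z̃, where D⁺ is the Moore–Penrose pseudoinverse of D, Π is the orthogonal projection onto the null space of D, and z̃ is an independent random vector with i.i.d. N(0, v²) entries. -/

import Mathlib

open MeasureTheory ProbabilityTheory Matrix

/-- `B` is the Moore–Penrose pseudoinverse of `A`. -/
def IsMoorePenrose {n m : Type*} [Fintype n] [Fintype m]
    (A : Matrix n m ℝ) (B : Matrix m n ℝ) : Prop :=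
  A * B * A = A ∧ B * A * B = B ∧ (A * B)ᵀ = A * B ∧ (B * A)ᵀ = B * A

open scoped ENNReal NNReal

variable {ι : Type*} [Fintype ι]

lemma aux_pi_dirac : Measure.pi (fun _ : ι => Measure.dirac (0 : ℝ)) = Measure.dirac (0 : ι → ℝ) := by
  refine Measure.pi_eq (μ := fun _ : ι => Measure.dirac (0:ℝ)) fun s hs => ?_
  rw [Measure.dirac_apply' _ (MeasurableSet.univ_pi hs)]
  by_cases h : (0 : ι → ℝ) ∈ Set.univ.pi s
  · rw [Set.indicator_of_mem h]
    simp only [Set.mem_univ_pi] at h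
    refine (Finset.prod_eq_one fun i _ => ?_).symm
    rw [Measure.dirac_apply' _ (hs i)]
    have h0 : (0 : ℝ) ∈ s i := by simpa using h i
    simp [Set.indicator_of_mem h0]
  · rw [Set.indicator_of_notMem h]
    simp only [Set.mem_univ_pi, not_forall] at h
    obtain ⟨i, hi⟩ := h
    have h0 : (0 : ℝ) ∉ s i := by simpa using hi
    refine (Finset.prod_eq_zero (Finset.mem_univ i) ?_).symm
    simp [Measure.dirac_apply' _ (hs i), Set.indicator_of_notMem h0]

lemma aux_pi_gaussian (V : NNReal) (hV : V ≠ 0) :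
    Measure.pi (fun _ : ι => gaussianReal 0 V)
      = (volume : Measure (ι → ℝ)).withDensity
          (fun x => ENNReal.ofReal (∏ i, gaussianPDFReal 0 V (x i))) := by
  refine Measure.pi_eq (μ := fun _ : ι => gaussianReal 0 V) fun s hs => ?_
  have hsm : MeasurableSet (Set.univ.pi s) := MeasurableSet.univ_pi hs
  rw [withDensity_apply _ hsm, ← lintegral_indicator hsm _]
  have hind : (Set.univ.pi s).indicator
      (fun x : ι → ℝ => ENNReal.ofReal (∏ i, gaussianPDFReal 0 V (x i)))
      = fun x => ENNReal.ofReal (∏ i, (s i).indicator (gaussianPDFReal 0 V) (x i)) := by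
    funext x
    by_cases hx : x ∈ Set.univ.pi s
    · rw [Set.indicator_of_mem hx]
      simp only [Set.mem_univ_pi] at hx
      congr 1
      exact Finset.prod_congr rfl fun i _ => (Set.indicator_of_mem (hx i) _).symm
    · rw [Set.indicator_of_notMem hx]
      simp only [Set.mem_univ_pi, not_forall] at hx
      obtain ⟨i, hi⟩ := hx
      rw [Finset.prod_eq_zero (Finset.mem_univ i) (by simp [Set.indicator_of_notMem hi]),
        ENNReal.ofReal_zero]
  rw [hind]
  have hint : Integrable (fun x : ι → ℝ => ∏ i, (s i).indicator (gaussianPDFReal 0 V) (x i)) :=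
    Integrable.fintype_prod fun i => (integrable_gaussianPDFReal 0 V).indicator (hs i)
  rw [← ofReal_integral_eq_lintegral_ofReal hint
      (ae_of_all _ fun x => Finset.prod_nonneg fun i _ =>
        Set.indicator_nonneg (fun y _ => gaussianPDFReal_nonneg 0 V y) _),
    volume_pi, integral_fintype_prod_eq_prod (fun i (y : ℝ) => (s i).indicator (gaussianPDFReal 0 V) y),
    ENNReal.ofReal_prod_of_nonneg (fun i _ => integral_nonneg
      (Set.indicator_nonneg fun y _ => gaussianPDFReal_nonneg 0 V y))]
  refine Finset.prod_congr rfl fun i _ => ?_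
  rw [gaussianReal_apply_eq_integral 0 hV (s i), integral_indicator (hs i)]

lemma aux_map_withDensity {α β : Type*} [MeasurableSpace α] [MeasurableSpace β]
    (e : α ≃ᵐ β) (ν : Measure α) (f : β → ℝ≥0∞) (hf : Measurable f) :
    Measure.map e (ν.withDensity (fun a => f (e a))) = (Measure.map e ν).withDensity f := by
  ext s hs
  rw [Measure.map_apply e.measurable hs, withDensity_apply _ (e.measurable hs),
    withDensity_apply _ hs, setLIntegral_map hs hf e.measurable]

set_option maxHeartbeats 1000000 in
lemma aux_gaussian_map_orthogonal [DecidableEq ι] (V : NNReal)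
    (A : Matrix ι ι ℝ) (hA : Aᵀ * A = 1) :
    MeasurePreserving (Matrix.toLin' A)
      (Measure.pi fun _ : ι => gaussianReal 0 V) (Measure.pi fun _ : ι => gaussianReal 0 V) := by
  have hAm : Measurable (Matrix.toLin' A) :=
    (LinearMap.continuous_on_pi _).measurable
  have hdet : A.det * A.det = 1 := by
    have := congrArg Matrix.det hA
    rwa [Matrix.det_mul, Matrix.det_transpose, Matrix.det_one] at this
  have hdet1 : |A.det| = 1 := by
    rcases mul_self_eq_one_iff.1 hdet with h | h <;> simp [h]
  have hdet0 : A.det ≠ 0 := by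
    intro h; rw [h] at hdet1; simp at hdet1
  -- the key invariance of the vec of squares
  have hsq : ∀ x : ι → ℝ, ∑ i, (A.mulVec x i) ^ 2 = ∑ i, (x i) ^ 2 := by
    intro x
    have h1 : A.mulVec x ⬝ᵥ A.mulVec x = x ⬝ᵥ x := by
      rw [Matrix.dotProduct_mulVec, ← Matrix.mulVec_transpose, Matrix.mulVec_mulVec, hA,
        Matrix.one_mulVec]
    simpa [dotProduct, sq] using h1
  constructor
  · exact hAm
  rcases eq_or_ne V 0 with hV | hV
  · subst hV
    simp only [gaussianReal_zero_var, aux_pi_dirac]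
    rw [Measure.map_dirac' hAm, map_zero]
  · rw [aux_pi_gaussian V hV]
    set ρ : (ι → ℝ) → ℝ≥0∞ := fun x => ENNReal.ofReal (∏ i, gaussianPDFReal 0 V (x i)) with hρ
    have hρm : Measurable ρ :=
      ENNReal.measurable_ofReal.comp
        (Finset.measurable_prod _ fun i _ =>
          (measurable_gaussianPDFReal 0 V).comp (measurable_pi_apply i))
    have hcomp : ∀ x, ρ (Matrix.toLin' A x) = ρ x := by
      intro x
      simp only [hρ, Matrix.toLin'_apply]
      congr 1
      have hexp : ∀ y : ι → ℝ, ∏ i, gaussianPDFReal 0 V (y i)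
          = (Real.sqrt (2 * Real.pi * V))⁻¹ ^ Fintype.card ι
            * Real.exp (-(∑ i, (y i) ^ 2) / (2 * V)) := by
        intro y
        simp only [gaussianPDFReal, sub_zero]
        rw [Finset.prod_mul_distrib, Finset.prod_const, ← Real.exp_sum, Finset.card_univ]
        congr 1
        rw [← Finset.sum_div, ← Finset.sum_neg_distrib]
      rw [hexp, hexp, hsq]
    -- build the measurable equiv from A
    have hinv : Invertible A := A.invertibleOfIsUnitDet (isUnit_iff_ne_zero.2 hdet0)
    let le : (ι → ℝ) ≃ₗ[ℝ] (ι → ℝ) := A.toLinearEquiv' hinv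
    let e : (ι → ℝ) ≃ᵐ (ι → ℝ) :=
      le.toContinuousLinearEquiv.toHomeomorph.toMeasurableEquiv
    have he : (e : (ι → ℝ) → (ι → ℝ)) = Matrix.toLin' A := rfl
    calc Measure.map (Matrix.toLin' A) (volume.withDensity ρ)
        = Measure.map e (volume.withDensity fun a => ρ (e a)) := by
          rw [he]; congr 1; exact (withDensity_congr_ae (ae_of_all _ fun x => (hcomp x))).symm
      _ = (Measure.map e volume).withDensity ρ := aux_map_withDensity e volume ρ hρm
      _ = volume.withDensity ρ := by
          have : Measure.map e (volume : Measure (ι → ℝ)) = volume := by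
            rw [he, Real.map_matrix_volume_pi_eq_smul_volume_pi hdet0]
            rw [abs_inv, hdet1]
            simp
          rw [this]

lemma aux_T_measurePreserving {n : ℕ} (V : NNReal) (P : Matrix (Fin n) (Fin n) ℝ)
    (hPP : P * P = P) (hPt : Pᵀ = P) :
    MeasurePreserving
      (fun p : (Fin n → ℝ) × (Fin n → ℝ) => P.mulVec p.1 + (1 - P).mulVec p.2)
      ((Measure.pi fun _ : Fin n => gaussianReal 0 V).prod
        (Measure.pi fun _ : Fin n => gaussianReal 0 V))
      (Measure.pi fun _ : Fin n => gaussianReal 0 V) := by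
  have h2 : P * (1 - P) = 0 := by rw [mul_sub, mul_one, hPP, sub_self]
  have h3 : (1 - P) * P = 0 := by rw [sub_mul, one_mul, hPP, sub_self]
  have h4 : (1 - P) * (1 - P) = 1 - P := by rw [mul_sub, mul_one, h3, sub_zero]
  have h1t : (1 - P)ᵀ = 1 - P := by rw [transpose_sub, transpose_one, hPt]
  set A : Matrix (Fin n ⊕ Fin n) (Fin n ⊕ Fin n) ℝ :=
    Matrix.fromBlocks P (1 - P) (1 - P) P with hAdef
  have hA : Aᵀ * A = 1 := by
    rw [hAdef, Matrix.fromBlocks_transpose, hPt, h1t, Matrix.fromBlocks_multiply,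
      hPP, h2, h3, h4]
    rw [show P + (1 - P) = 1 by abel, show (0 : Matrix (Fin n) (Fin n) ℝ) + 0 = 0 by abel,
      show (1 - P) + P = 1 by abel]
    exact Matrix.fromBlocks_one
  have hMP := aux_gaussian_map_orthogonal (ι := Fin n ⊕ Fin n) V A hA
  set e := MeasurableEquiv.sumPiEquivProdPi (fun _ : Fin n ⊕ Fin n => ℝ) with he
  have h1 : MeasurePreserving e.symm
      (((Measure.pi fun _ : Fin n => gaussianReal 0 V).prod
        (Measure.pi fun _ : Fin n => gaussianReal 0 V)))
      (Measure.pi fun _ : Fin n ⊕ Fin n => gaussianReal 0 V) :=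
    measurePreserving_sumPiEquivProdPi_symm (fun _ : Fin n ⊕ Fin n => gaussianReal 0 V)
  have h2' : MeasurePreserving e
      (Measure.pi fun _ : Fin n ⊕ Fin n => gaussianReal 0 V)
      (((Measure.pi fun _ : Fin n => gaussianReal 0 V).prod
        (Measure.pi fun _ : Fin n => gaussianReal 0 V))) :=
    measurePreserving_sumPiEquivProdPi (fun _ : Fin n ⊕ Fin n => gaussianReal 0 V)
  have hfst : MeasurePreserving Prod.fst
      (((Measure.pi fun _ : Fin n => gaussianReal 0 V).prod
        (Measure.pi fun _ : Fin n => gaussianReal 0 V)))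
      (Measure.pi fun _ : Fin n => gaussianReal 0 V) :=
    ⟨measurable_fst, Measure.fst_prod⟩
  have hcomp := hfst.comp ((h2'.comp hMP).comp h1)
  have heq : (Prod.fst ∘ (⇑e ∘ ⇑(Matrix.toLin' A)) ∘ ⇑e.symm)
      = fun p : (Fin n → ℝ) × (Fin n → ℝ) => P.mulVec p.1 + (1 - P).mulVec p.2 := by
    funext p
    have hsym : (⇑e.symm p) = Sum.elim p.1 p.2 := by
      funext i; cases i <;> rfl
    simp only [Function.comp_apply, hsym, Matrix.toLin'_apply, hAdef,
      Matrix.fromBlocks_mulVec]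
    rfl
  rw [← heq]
  exact hcomp

theorem gaussian_conditioning_linear_constraint'
    {n m : ℕ} (v : NNReal) (D : Matrix (Fin m) (Fin n) ℝ)
    (Dp : Matrix (Fin n) (Fin m) ℝ)
    (hABA : D * Dp * D = D) (hBAB : Dp * D * Dp = Dp) (hBAt : (Dp * D)ᵀ = Dp * D)
    (μ : Measure (Fin n → ℝ))
    (hμ : μ = Measure.pi (fun _ : Fin n => gaussianReal 0 (v ^ 2)))
    (φ : (Fin n → ℝ) → ℝ) (hφ : Integrable φ μ)
    (g : (Fin m → ℝ) → ℝ) (hg : Measurable g) (hgb : ∃ M, ∀ y, |g y| ≤ M) :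
    ∫ z, φ z * g (D.mulVec z) ∂μ
      = ∫ z, (∫ w, φ (Dp.mulVec (D.mulVec z) + (1 - Dp * D).mulVec w) ∂μ)
          * g (D.mulVec z) ∂μ := by
  have hPP : (Dp * D) * (Dp * D) = Dp * D := by rw [← Matrix.mul_assoc, hBAB]
  have hDP : D * (Dp * D) = D := by rw [← Matrix.mul_assoc, hABA]
  subst hμ
  simp_rw [Matrix.mulVec_mulVec]
  set P := Dp * D with hPdef
  set μ := Measure.pi (fun _ : Fin n => gaussianReal 0 (v ^ 2)) with hμdef
  set T := fun p : (Fin n → ℝ) × (Fin n → ℝ) => P.mulVec p.1 + (1 - P).mulVec p.2 with hTdef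
  have hT : MeasurePreserving T (μ.prod μ) μ :=
    aux_T_measurePreserving (v ^ 2) P hPP hBAt
  have hDmeas : Measurable (fun z : Fin n → ℝ => D.mulVec z) := by
    have := (LinearMap.continuous_on_pi D.mulVecLin).measurable
    exact this
  set F := fun z : Fin n → ℝ => φ z * g (D.mulVec z) with hFdef
  obtain ⟨M, hM⟩ := hgb
  have hF : Integrable F μ := by
    have := Integrable.bdd_mul hφ ((hg.comp hDmeas).aestronglyMeasurable)
      (ae_of_all _ fun x => by simpa [Real.norm_eq_abs] using hM (D.mulVec x))
    simpa [hFdef, mul_comm] using this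
  have hDT : ∀ z w : Fin n → ℝ, D.mulVec (T (z, w)) = D.mulVec z := by
    intro z w
    have hD1P : D * (1 - P) = 0 := by rw [Matrix.mul_sub, Matrix.mul_one, hDP, sub_self]
    simp only [hTdef, Matrix.mulVec_add, Matrix.mulVec_mulVec, hDP, hD1P,
      Matrix.zero_mulVec, add_zero]
  have hFmap : AEStronglyMeasurable F (Measure.map T (μ.prod μ)) := by
    rw [hT.map_eq]; exact hF.aestronglyMeasurable
  have hFT : Integrable (fun p => F (T p)) (μ.prod μ) :=
    (integrable_map_measure hFmap hT.measurable.aemeasurable).1 (by rw [hT.map_eq]; exact hF)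
  have h1 : ∫ z, F z ∂μ = ∫ p, F (T p) ∂(μ.prod μ) := by
    conv_lhs => rw [← hT.map_eq]
    exact integral_map hT.measurable.aemeasurable hFmap
  rw [h1, integral_prod _ hFT]
  simp only [hFdef]
  have h2 : ∀ z, (∫ w, φ (T (z, w)) * g (D.mulVec (T (z, w))) ∂μ)
      = (∫ w, φ (T (z, w)) ∂μ) * g (D.mulVec z) := by
    intro z
    simp_rw [hDT z]
    exact integral_mul_const _ _
  calc ∫ z, ∫ w, φ (T (z, w)) * g (D.mulVec (T (z, w))) ∂μ ∂μ
      = ∫ z, (∫ w, φ (T (z, w)) ∂μ) * g (D.mulVec z) ∂μ := by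
        exact integral_congr_ae (ae_of_all _ fun z => h2 z)
    _ = ∫ z, (∫ w, φ (P.mulVec z + (1 - P).mulVec w) ∂μ)
          * g (D.mulVec z) ∂μ := by
        simp only [hTdef]

/-- Conditioning a standard iid Gaussian vector on a linear constraint `D z = b`:
the conditional law of `z` given `D z = b` is that of `D⁺ b + Π z̃`, where `Π = I - D⁺ D`
is the orthogonal projection onto the null space of `D` and `z̃` is a fresh iid Gaussian.
Stated in kernel form: for every integrable `φ` and bounded measurable function `g` of `Dz`,
the expectations agree (here `b = D z` ranges over the range of `D`). -/
theorem gaussian_conditioning_linear_constraint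
    {n m : ℕ} (v : NNReal) (D : Matrix (Fin m) (Fin n) ℝ)
    (Dp : Matrix (Fin n) (Fin m) ℝ) (hDp : IsMoorePenrose D Dp)
    (μ : Measure (Fin n → ℝ))
    (hμ : μ = Measure.pi (fun _ : Fin n => gaussianReal 0 (v ^ 2)))
    (φ : (Fin n → ℝ) → ℝ) (hφ : Integrable φ μ)
    (g : (Fin m → ℝ) → ℝ) (hg : Measurable g) (hgb : ∃ M, ∀ y, |g y| ≤ M) :
    ∫ z, φ z * g (D.mulVec z) ∂μ
      = ∫ z, (∫ w, φ (Dp.mulVec (D.mulVec z) + (1 - Dp * D).mulVec w) ∂μ)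
          * g (D.mulVec z) ∂μ := by
  obtain ⟨hABA, hBAB, _, hBAt⟩ := hDp
  exact gaussian_conditioning_linear_constraint' v D Dp hABA hBAB hBAt μ hμ φ hφ g hg hgb
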